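/- If c > 0 is a constant such that N(AB) ≤ c · N(A) · N(B) for every n ≥ 1 and all A, B ∈ M_n(ℂ) (that is, cN(·) is submultiplicative on M_n(ℂ) for every n), then c ≥ γ; in other words, γ = (2σ²+2μ²)^{1/2}/σ² is the smallest constant, independent of n, making a scalar multiple of N submultiplicative. -/

import Mathlib

open Matrix

/-- The Frobenius norm of a complex matrix. -/
noncomputable def frobNorm {n : ℕ} (A : Matrix (Fin n) (Fin n) ℂ) : ℝ :=
  Real.sqrt (∑ i, ∑ j, ‖A i j‖ ^ 2)

/-- The norm `N(Z) = ((1/2)σ²‖Z‖_F² + (1/2)μ²|tr Z|²)^(1/2)` on `M_n(ℂ)`. -/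
noncomputable def N2 (σ μ : ℝ) {n : ℕ} (Z : Matrix (Fin n) (Fin n) ℂ) : ℝ :=
  Real.sqrt ((1 / 2) * σ ^ 2 * frobNorm Z ^ 2 + (1 / 2) * μ ^ 2 * ‖Z.trace‖ ^ 2)

lemma frob_one {A : Matrix (Fin 2) (Fin 2) ℂ}
    (h : (∑ i, ∑ j, ‖A i j‖ ^ 2) = 1) : frobNorm A = 1 := by
  rw [frobNorm, h, Real.sqrt_one]

/-- If `c > 0` is such that `cN(·)` is submultiplicative on `M_n(ℂ)` for
every `n ≥ 1`, then `c ≥ γ = √(2σ²+2μ²)/σ²`; i.e. `γ` is the smallest constant,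
independent of `n`, making a scalar multiple of `N` submultiplicative. -/
theorem gamma_is_optimal (σ μ : ℝ) (hσ : 0 < σ)
    (γ : ℝ) (hγ : γ = Real.sqrt (2 * σ ^ 2 + 2 * μ ^ 2) / σ ^ 2)
    (c : ℝ) (hc : 0 < c)
    (hsub : ∀ n : ℕ, 1 ≤ n → ∀ A B : Matrix (Fin n) (Fin n) ℂ,
      N2 σ μ (A * B) ≤ c * N2 σ μ A * N2 σ μ B) :
    γ ≤ c := by
  have hAB : (!![0, 1; 0, 0] : Matrix (Fin 2) (Fin 2) ℂ) * !![0, 0; 1, 0]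
      = !![(1 : ℂ), 0; 0, 0] := by
    ext i j
    fin_cases i <;> fin_cases j <;> simp [Matrix.mul_apply, Fin.sum_univ_two]
  have hfA : frobNorm (!![0, 1; 0, 0] : Matrix (Fin 2) (Fin 2) ℂ) = 1 :=
    frob_one (by simp [Fin.sum_univ_two])
  have hfB : frobNorm (!![0, 0; 1, 0] : Matrix (Fin 2) (Fin 2) ℂ) = 1 :=
    frob_one (by simp [Fin.sum_univ_two])
  have hfC : frobNorm (!![(1 : ℂ), 0; 0, 0] : Matrix (Fin 2) (Fin 2) ℂ) = 1 :=
    frob_one (by simp [Fin.sum_univ_two])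
  have htA : (!![0, 1; 0, 0] : Matrix (Fin 2) (Fin 2) ℂ).trace = 0 := by
    simp [Matrix.trace_fin_two]
  have htB : (!![0, 0; 1, 0] : Matrix (Fin 2) (Fin 2) ℂ).trace = 0 := by
    simp [Matrix.trace_fin_two]
  have htC : (!![(1 : ℂ), 0; 0, 0] : Matrix (Fin 2) (Fin 2) ℂ).trace = 1 := by
    simp [Matrix.trace_fin_two]
  have hNA : N2 σ μ (!![0, 1; 0, 0] : Matrix (Fin 2) (Fin 2) ℂ)
      = Real.sqrt ((1/2) * σ ^ 2) := by
    rw [N2, hfA, htA]; simp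
  have hNB : N2 σ μ (!![0, 0; 1, 0] : Matrix (Fin 2) (Fin 2) ℂ)
      = Real.sqrt ((1/2) * σ ^ 2) := by
    rw [N2, hfB, htB]; simp
  have hNC : N2 σ μ (!![(1 : ℂ), 0; 0, 0] : Matrix (Fin 2) (Fin 2) ℂ)
      = Real.sqrt ((1/2) * σ ^ 2 + (1/2) * μ ^ 2) := by
    rw [N2, hfC, htC]; norm_num
  have key := hsub 2 (by norm_num) !![0, 1; 0, 0] !![0, 0; 1, 0]
  rw [hAB, hNA, hNB, hNC] at key
  have hs : Real.sqrt ((1/2) * σ ^ 2) * Real.sqrt ((1/2) * σ ^ 2) = (1/2) * σ ^ 2 :=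
    Real.mul_self_sqrt (by positivity)
  rw [mul_assoc, hs] at key
  have h4 : Real.sqrt (2 * σ ^ 2 + 2 * μ ^ 2) = 2 * Real.sqrt ((1/2) * σ ^ 2 + (1/2) * μ ^ 2) := by
    rw [show (2 : ℝ) * σ ^ 2 + 2 * μ ^ 2 = 4 * ((1/2) * σ ^ 2 + (1/2) * μ ^ 2) by ring,
      show (4 : ℝ) = 2 ^ 2 by norm_num, Real.sqrt_mul (by positivity), Real.sqrt_sq (by norm_num)]
  rw [hγ, h4, div_le_iff₀ (by positivity)]
  nlinarith [key]
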